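/- Let 𝒯 = (T, σ, 1) be a temperature-1 tile assembly system and let α be a producible assembly of 𝒯. Then for every tile ((x,y), t) in α, there exists a producible path P of 𝒯 and an index i such that P_i = ((x,y), t). (In particular, every tile of a producible assembly at temperature 1 lies on some producible path starting from the seed.) -/

import Mathlib

/-- A tile type: four sides, each carrying a glue type from `G`. -/
structure TileType (G : Type) where
  north : G
  south : G
  east : G
  west : G

/-- An assembly: a partial placement of tile types on ℤ². -/
abbrev Assembly (G : Type) := ℤ × ℤ → Option (TileType G)

/-- A (temperature-1) tile assembly system: a tile set, glue strengths, and a seed. -/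
structure TAS (G : Type) where
  tiles : Set (TileType G)
  strength : G → ℕ
  seed : Assembly G

/-- Two tile types interact when placed at relative displacement `d`
(`d` = position of the second minus position of the first): their abutting glue
types are equal and have strength ≥ 1. -/
def interacts {G : Type} (str : G → ℕ) (t t' : TileType G) (d : ℤ × ℤ) : Prop :=
  (d = (1, 0) ∧ t.east = t'.west ∧ 1 ≤ str t.east) ∨
  (d = (-1, 0) ∧ t.west = t'.east ∧ 1 ≤ str t.west) ∨
  (d = (0, 1) ∧ t.north = t'.south ∧ 1 ≤ str t.north) ∨
  (d = (0, -1) ∧ t.south = t'.north ∧ 1 ≤ str t.south)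

/-- Producible assemblies of a temperature-1 system: obtained from the seed by
repeatedly attaching single tiles that bind with strength ≥ 1. -/
inductive Producible {G : Type} (sys : TAS G) : Assembly G → Prop
  | seed : Producible sys sys.seed
  | step (α : Assembly G) (p : ℤ × ℤ) (t : TileType G) :
      Producible sys α → t ∈ sys.tiles → α p = none →
      (∃ q t', α q = some t' ∧ interacts sys.strength t' t (p - q)) →
      Producible sys (Function.update α p (some t))

/-- The assembly obtained from `σ` by placing the first `k` tiles of the sequence `P`. -/
def addPath {G : Type} (σ : Assembly G) (P : ℕ → (ℤ × ℤ) × TileType G) : ℕ → Assembly G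
  | 0 => σ
  | k + 1 => Function.update (addPath σ P k) (P k).1 (some (P k).2)

/-- `P` (of length `n`) is a path: positions are pairwise distinct and each
consecutive pair of tiles interacts. -/
def IsPath {G : Type} (sys : TAS G) (n : ℕ) (P : ℕ → (ℤ × ℤ) × TileType G) : Prop :=
  (∀ a < n, ∀ b < n, (P a).1 = (P b).1 → a = b) ∧
  (∀ k, k + 1 < n → interacts sys.strength (P k).2 (P (k + 1)).2 ((P (k + 1)).1 - (P k).1))

/-- A producible path: a path that grows tile-by-tile in path order from the seed,
every intermediate assembly being producible. -/
def ProduciblePath {G : Type} (sys : TAS G) (n : ℕ) (P : ℕ → (ℤ × ℤ) × TileType G) : Prop :=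
  IsPath sys n P ∧ ∀ k ≤ n, Producible sys (addPath sys.seed P k)


lemma seed_sub {G : Type} {sys : TAS G} {α : Assembly G} (hα : Producible sys α) :
    ∀ q s, sys.seed q = some s → α q = some s := by
  induction hα with
  | seed => intro q s h; exact h
  | step β pp tt hβ _ hnone _ ih =>
    intro q s h
    have hq := ih q s h
    have hqp : q ≠ pp := fun e => by rw [e, hnone] at hq; exact nomatch hq
    rw [Function.update_of_ne hqp]; exact hq

lemma addPath_congr {G : Type} (σ : Assembly G) (P Q : ℕ → (ℤ × ℤ) × TileType G)
    (k : ℕ) (h : ∀ j < k, P j = Q j) : addPath σ P k = addPath σ Q k := by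
  induction k with
  | zero => rfl
  | succ m ih =>
    have h1 : P m = Q m := h m (Nat.lt_succ_self m)
    simp only [addPath, ih (fun j hj => h j (hj.trans (Nat.lt_succ_self m))), h1]

lemma main_aux {G : Type} (sys : TAS G) (α : Assembly G) (hα : Producible sys α) :
    ∀ p t, α p = some t →
    ∃ n P, ProduciblePath sys n P ∧ (∃ i < n, P i = (p, t)) ∧
      ∀ k < n, α (P k).1 = some (P k).2 := by
  induction hα with
  | seed =>
    intro p t ht
    refine ⟨1, fun _ => (p, t), ⟨⟨fun a ha b hb _ => by omega, fun k hk => by omega⟩, ?_⟩,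
      ⟨0, Nat.zero_lt_one, rfl⟩, fun k _ => ht⟩
    intro k hk
    interval_cases k
    · exact Producible.seed
    · have h1 : addPath sys.seed (fun _ => (p, t)) 1 = sys.seed := by
        funext q
        by_cases hq : q = p
        · subst hq; simp [addPath, ht]
        · simp [addPath, Function.update_of_ne hq]
      rw [h1]; exact Producible.seed
  | step β pp tt hβ htiles hnone hEx ih =>
    intro p t ht
    by_cases hp : p = pp
    · subst hp
      have htt : t = tt := by
        rw [Function.update_self] at ht; exact (Option.some.inj ht).symm
      subst htt
      obtain ⟨q, t'', hq, hint⟩ := hEx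
      obtain ⟨n, P, ⟨⟨hdist, hcons⟩, hprod⟩, ⟨i, hi, hPi⟩, hsub⟩ := ih q t'' hq
      have hne : ∀ k < n, (P k).1 ≠ p := by
        intro k hk e
        have hk2 := hsub k hk
        rw [e, hnone] at hk2; exact nomatch hk2
      set Q : ℕ → (ℤ × ℤ) × TileType G := fun k => if k < i + 1 then P k else (p, t) with hQ
      have hQP : ∀ j < i + 1, P j = Q j := by
        intro j hj; simp only [hQ, if_pos hj]
      have hQagree : ∀ k ≤ i + 1, addPath sys.seed Q k = addPath sys.seed P k := by
        intro k hk
        exact (addPath_congr sys.seed P Q k (fun j hj => hQP j (lt_of_lt_of_le hj hk))).symm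
      have hseedp : sys.seed p = none := by
        cases h : sys.seed p with
        | none => rfl
        | some s => rw [seed_sub hβ p s h] at hnone; exact nomatch hnone
      have hnonep : ∀ k ≤ i + 1, addPath sys.seed P k p = none := by
        intro k hk
        induction k with
        | zero => exact hseedp
        | succ m ihm =>
          have hm : m < n := by omega
          simp only [addPath]
          rw [Function.update_of_ne (fun e => hne m hm (by rw [← e]))]
          exact ihm (by omega)
      refine ⟨i + 2, Q, ⟨⟨?_, ?_⟩, ?_⟩, ⟨i + 1, by omega, by simp [hQ]⟩, ?_⟩
      · intro a ha b hb hab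
        by_cases ha' : a < i + 1 <;> by_cases hb' : b < i + 1
        · have h2 := hdist a (by omega) b (by omega)
          simp only [hQ, if_pos ha', if_pos hb'] at hab
          exact h2 hab
        · exfalso
          simp only [hQ, if_pos ha', if_neg hb'] at hab
          exact hne a (by omega) hab
        · exfalso
          simp only [hQ, if_neg ha', if_pos hb'] at hab
          exact hne b (by omega) hab.symm
        · omega
      · intro k hk
        by_cases hk' : k + 1 < i + 1
        · simp only [hQ, if_pos hk', if_pos (by omega : k < i + 1)]
          exact hcons k (by omega)
        · have hki : k = i := by omega
          subst hki
          have h1 : Q k = (q, t'') := by simp [hQ, Nat.lt_succ_self, hPi]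
          have h2 : Q (k + 1) = (p, t) := by simp [hQ]
          rw [h1, h2]
          exact hint
      · intro k hk
        by_cases hk' : k ≤ i + 1
        · rw [hQagree k hk']; exact hprod k (by omega)
        · have hki : k = i + 2 := by omega
          subst hki
          have h1 : addPath sys.seed Q (i + 2)
              = Function.update (addPath sys.seed P (i + 1)) p (some t) := by
            have h2 : addPath sys.seed Q (i + 2)
                = Function.update (addPath sys.seed Q (i + 1)) (Q (i + 1)).1
                    (some (Q (i + 1)).2) := rfl
            rw [h2, hQagree (i + 1) le_rfl]
            simp [hQ]
          rw [h1]
          refine Producible.step _ p t (hprod (i + 1) (by omega)) htiles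
            (hnonep (i + 1) le_rfl) ⟨q, t'', ?_, hint⟩
          have h3 : addPath sys.seed P (i + 1)
              = Function.update (addPath sys.seed P i) (P i).1 (some (P i).2) := rfl
          rw [h3, hPi]
          simp
      · intro k hk
        by_cases hk' : k < i + 1
        · have hQk : Q k = P k := (hQP k hk').symm
          rw [hQk, Function.update_of_ne (hne k (by omega))]
          exact hsub k (by omega)
        · have hki : k = i + 1 := by omega
          subst hki
          have hQk : Q (i + 1) = (p, t) := by simp [hQ]
          rw [hQk]
          exact Function.update_self p (some t) β
    · have ht' : β p = some t := by
        rw [Function.update_of_ne hp] at ht; exact ht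
      obtain ⟨n, P, hPP, hex, hsub⟩ := ih p t ht'
      refine ⟨n, P, hPP, hex, ?_⟩
      intro k hk
      have hk2 := hsub k hk
      have hne : (P k).1 ≠ pp := fun e => by rw [e, hnone] at hk2; exact nomatch hk2
      rw [Function.update_of_ne hne]; exact hk2

/-- At temperature 1, every tile of a producible assembly lies on some
producible path starting from the seed. -/
theorem tile_on_producible_path {G : Type} (sys : TAS G) (α : Assembly G)
    (hα : Producible sys α) (p : ℤ × ℤ) (t : TileType G) (ht : α p = some t) :
    ∃ (n : ℕ) (P : ℕ → (ℤ × ℤ) × TileType G),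
      ProduciblePath sys n P ∧ ∃ i < n, P i = (p, t) := by
  obtain ⟨n, P, hPP, hex, _⟩ := main_aux sys α hα p t ht
  exact ⟨n, P, hPP, hex⟩
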